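/- Let T be a self-adjoint operator on an n-dimensional real space V with a non-degenerate symmetric bilinear form of signature (n-p,p) with p ≤ n-p, and suppose T² = 0. Then rank(T) ≤ p, and V admits a basis in which T is represented by a block matrix consisting of k = rank(T) nilpotent 2×2 Jordan blocks and an (n-2k)×(n-2k) zero block. -/

import Mathlib

open Module LinearMap Submodule

lemma aux_rank {V : Type*} [AddCommGroup V] [Module ℝ V] [FiniteDimensional ℝ V]
    {n p : ℕ} (hpn' : p ≤ n)
    (B : V →ₗ[ℝ] V →ₗ[ℝ] ℝ)
    (b₀ : Basis (Fin n) ℝ V)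
    (hdiag : ∀ i : Fin n, B (b₀ i) (b₀ i) = if (i : ℕ) < p then -1 else 1)
    (horth : ∀ i j : Fin n, i ≠ j → B (b₀ i) (b₀ j) = 0)
    (T : V →ₗ[ℝ] V)
    (hT2 : T ∘ₗ T = 0)
    (hsa : ∀ y z : V, B (T y) z = B y (T z)) :
    Module.finrank ℝ (LinearMap.range T) ≤ p := by
  classical
  have hB : ∀ i j : Fin n, B (b₀ i) (b₀ j) =
      if i = j then (if (i : ℕ) < p then (-1 : ℝ) else 1) else 0 := by
    intro i j
    by_cases h : i = j
    · subst h; simp [hdiag i]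
    · simp [h, horth i j h]
  have hcoord : ∀ (x : V) (i : Fin n),
      B x (b₀ i) = (b₀.repr x i) * (if (i : ℕ) < p then (-1 : ℝ) else 1) := by
    intro x i
    conv_lhs => rw [← b₀.sum_repr x]
    rw [map_sum]
    simp only [map_smul, LinearMap.smul_apply, smul_eq_mul, LinearMap.sum_apply]
    rw [Finset.sum_eq_single i]
    · rw [hB i i, if_pos rfl]
    · intro j _ hj
      rw [hB j i, if_neg hj, mul_zero]
    · intro h; exact absurd (Finset.mem_univ i) h
  have hiso : ∀ x ∈ LinearMap.range T, B x x = 0 := by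
    rintro _ ⟨a, rfl⟩
    rw [hsa]
    have : T (T a) = 0 := by
      have := congrArg (fun f => f a) hT2
      simpa using this
    rw [this, map_zero]
  let f : V →ₗ[ℝ] (Fin p → ℝ) :=
    LinearMap.pi fun i : Fin p => B.flip (b₀ (Fin.castLE hpn' i))
  have hinj : Function.Injective ⇑(f ∘ₗ (LinearMap.range T).subtype) := by
    rw [← LinearMap.ker_eq_bot, LinearMap.ker_eq_bot']
    rintro ⟨x, hx⟩ hfx
    have hzero : ∀ i : Fin p, B x (b₀ (Fin.castLE hpn' i)) = 0 := by
      intro i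
      have := congrArg (fun g => g i) hfx
      simpa [f] using this
    have hlow : ∀ i : Fin n, (i : ℕ) < p → b₀.repr x i = 0 := by
      intro i hi
      have h1 := hzero ⟨(i : ℕ), hi⟩
      have h2 : Fin.castLE hpn' (⟨(i : ℕ), hi⟩ : Fin p) = i := by
        apply Fin.ext; simp
      rw [h2, hcoord x i, if_pos hi] at h1
      linarith [h1]
    have hxx : B x x = ∑ i : Fin n, (b₀.repr x i) * ((b₀.repr x i) *
        (if (i : ℕ) < p then (-1 : ℝ) else 1)) :=
      calc B x x = B x (∑ i : Fin n, b₀.repr x i • b₀ i) := by rw [b₀.sum_repr]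
        _ = ∑ i : Fin n, (b₀.repr x i) * B x (b₀ i) := by
            rw [map_sum]; simp only [map_smul, smul_eq_mul]
        _ = _ := Finset.sum_congr rfl fun i _ => by rw [hcoord]
    have hsum0 : ∑ i : Fin n, (b₀.repr x i) * ((b₀.repr x i) *
        (if (i : ℕ) < p then (-1 : ℝ) else 1)) = 0 := by
      rw [← hxx]; exact hiso x hx
    have hnonneg : ∀ i ∈ Finset.univ, (0:ℝ) ≤ (b₀.repr x i) * ((b₀.repr x i) *
        (if (i : ℕ) < p then (-1 : ℝ) else 1)) := by
      intro i _
      by_cases hi : (i : ℕ) < p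
      · rw [hlow i hi]; simp
      · rw [if_neg hi, mul_one]; exact mul_self_nonneg _
    have hall : ∀ i : Fin n, b₀.repr x i = 0 := by
      intro i
      by_cases hi : (i : ℕ) < p
      · exact hlow i hi
      · have := (Finset.sum_eq_zero_iff_of_nonneg hnonneg).mp hsum0 i (Finset.mem_univ i)
        rw [if_neg hi, mul_one] at this
        exact mul_self_eq_zero.mp this
    have hx0 : x = 0 := by
      rw [← b₀.sum_repr x]
      refine Finset.sum_eq_zero fun i _ => ?_
      rw [hall i, zero_smul]
    exact Subtype.ext hx0
  calc Module.finrank ℝ ↥(LinearMap.range T)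
      ≤ Module.finrank ℝ (Fin p → ℝ) := LinearMap.finrank_le_finrank_of_injective hinj
    _ = p := by simp


open Module LinearMap Submodule

lemma aux_basis {V : Type*} [AddCommGroup V] [Module ℝ V] [FiniteDimensional ℝ V]
    {n : ℕ} (T : V →ₗ[ℝ] V) (hT2 : T ∘ₗ T = 0)
    (hn : Module.finrank ℝ V = n)
    (hk2 : 2 * Module.finrank ℝ (LinearMap.range T) ≤ n) :
    ∃ b : Basis (Fin n) ℝ V, ∀ i j : Fin n,
      (LinearMap.toMatrix b b T) i j =
        if (i : ℕ) < 2 * Module.finrank ℝ (LinearMap.range T) ∧ (i : ℕ) % 2 = 1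
            ∧ (j : ℕ) = (i : ℕ) - 1
        then 1 else 0 := by
  classical
  set k := Module.finrank ℝ (LinearMap.range T) with hk
  set W := LinearMap.range T with hWdef
  set K := LinearMap.ker T with hKdef
  have hT2' : ∀ x : V, T (T x) = 0 := fun x => by
    have := congrArg (fun f => f x) hT2; simpa using this
  have hWK : W ≤ K := by
    rintro _ ⟨a, rfl⟩
    exact hT2' a
  -- basis of W
  have hkW : Module.finrank ℝ W = k := rfl
  let wb : Basis (Fin k) ℝ W := Module.finBasisOfFinrankEq ℝ W hkW
  let w : Fin k → V := fun m => (wb m : V)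
  have hwW : ∀ m, w m ∈ W := fun m => (wb m).2
  -- preimages
  have hv : ∀ m : Fin k, ∃ x : V, T x = w m := fun m => (wb m).2
  let v : Fin k → V := fun m => (hv m).choose
  have hvw : ∀ m, T (v m) = w m := fun m => (hv m).choose_spec
  -- complement of W inside K
  obtain ⟨U, hU⟩ := Submodule.exists_isCompl (W.comap K.subtype)
  let Uv : Submodule ℝ V := U.map K.subtype
  have hmapW : (W.comap K.subtype).map K.subtype = W := by
    rw [Submodule.map_comap_subtype]
    exact inf_eq_right.mpr hWK
  have hsup : W ⊔ Uv = K := by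
    have := congrArg (Submodule.map K.subtype) hU.sup_eq_top
    rwa [Submodule.map_sup, hmapW, Submodule.map_top, Submodule.range_subtype] at this
  have hinf : W ⊓ Uv = ⊥ := by
    have := congrArg (Submodule.map K.subtype) hU.inf_eq_bot
    rwa [Submodule.map_inf K.subtype (Submodule.injective_subtype K), hmapW, Submodule.map_bot] at this
  have hUvK : Uv ≤ K := by
    rw [← hsup]; exact le_sup_right
  -- dimension of Uv
  have hdimK : Module.finrank ℝ K + k = n := by
    have h0 := LinearMap.finrank_range_add_finrank_ker T
    rw [hn, ← hWdef, ← hKdef, ← hk] at h0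
    omega
  have hdimUv : Module.finrank ℝ Uv = n - 2 * k := by
    have h1 := Submodule.finrank_sup_add_finrank_inf_eq W Uv
    rw [hsup, hinf] at h1
    simp only [finrank_bot, add_zero] at h1
    omega
  let ub : Basis (Fin (n - 2 * k)) ℝ Uv := Module.finBasisOfFinrankEq ℝ Uv hdimUv
  let u : Fin (n - 2 * k) → V := fun l => (ub l : V)
  have huU : ∀ l, u l ∈ Uv := fun l => (ub l).2
  -- the family
  let c : Fin n → V := fun j =>
    if h : (j : ℕ) < 2 * k then
      if (j : ℕ) % 2 = 0 then v ⟨(j : ℕ) / 2, by omega⟩ else w ⟨(j : ℕ) / 2, by omega⟩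
    else u ⟨(j : ℕ) - 2 * k, by have := j.isLt; omega⟩
  -- span facts
  have hspanw : Submodule.span ℝ (Set.range w) = W := by
    have h1 : Set.range w = W.subtype '' Set.range wb := by
      rw [← Set.range_comp]; rfl
    rw [h1, Submodule.span_image, wb.span_eq, Submodule.map_top, Submodule.range_subtype]
  have hspanu : Submodule.span ℝ (Set.range u) = Uv := by
    have h1 : Set.range u = Uv.subtype '' Set.range ub := by
      rw [← Set.range_comp]; rfl
    rw [h1, Submodule.span_image, ub.span_eq, Submodule.map_top, Submodule.range_subtype]
  -- membership of the pieces in range c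
  have hw_mem : ∀ m : Fin k, w m ∈ Set.range c := by
    intro m
    refine ⟨⟨2 * (m : ℕ) + 1, by have := m.isLt; omega⟩, ?_⟩
    have h1 : (2 * (m : ℕ) + 1) < 2 * k := by have := m.isLt; omega
    have h2 : (2 * (m : ℕ) + 1) % 2 = 1 := by omega
    have h3 : (2 * (m : ℕ) + 1) / 2 = (m : ℕ) := by omega
    simp only [c, dif_pos h1, h2]
    norm_num [h3]
  have hv_mem : ∀ m : Fin k, v m ∈ Set.range c := by
    intro m
    refine ⟨⟨2 * (m : ℕ), by have := m.isLt; omega⟩, ?_⟩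
    have h1 : (2 * (m : ℕ)) < 2 * k := by have := m.isLt; omega
    have h2 : (2 * (m : ℕ)) % 2 = 0 := by omega
    have h3 : (2 * (m : ℕ)) / 2 = (m : ℕ) := by omega
    simp only [c, dif_pos h1, h2]
    norm_num [h3]
  have hu_mem : ∀ l : Fin (n - 2 * k), u l ∈ Set.range c := by
    intro l
    refine ⟨⟨2 * k + (l : ℕ), by have := l.isLt; omega⟩, ?_⟩
    have h1 : ¬ (2 * k + (l : ℕ) < 2 * k) := by omega
    have h3 : (2 * k + (l : ℕ)) - 2 * k = (l : ℕ) := by omega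
    simp only [c, dif_neg h1]
    congr 1
    exact Fin.ext h3
  -- K ≤ span of range c
  have hK_le : K ≤ Submodule.span ℝ (Set.range c) := by
    rw [← hsup]
    apply sup_le
    · rw [← hspanw]
      exact Submodule.span_mono (Set.range_subset_iff.mpr hw_mem) |>.trans
        (le_of_eq rfl)
    · rw [← hspanu]
      exact Submodule.span_mono (Set.range_subset_iff.mpr hu_mem) |>.trans
        (le_of_eq rfl)
  -- spanning
  have htop : ⊤ ≤ Submodule.span ℝ (Set.range c) := by
    intro x _
    have hTx : T x ∈ Submodule.span ℝ (Set.range w) := by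
      rw [hspanw]; exact ⟨x, rfl⟩
    rw [mem_span_range_iff_exists_fun] at hTx
    obtain ⟨a, ha⟩ := hTx
    have hker : x - ∑ m : Fin k, a m • v m ∈ K := by
      have : T (x - ∑ m : Fin k, a m • v m) = 0 := by
        rw [map_sub, map_sum]
        simp only [map_smul, hvw]
        rw [ha, sub_self]
      exact this
    have h1 : x - ∑ m : Fin k, a m • v m ∈ Submodule.span ℝ (Set.range c) := hK_le hker
    have h2 : (∑ m : Fin k, a m • v m) ∈ Submodule.span ℝ (Set.range c) :=
      Submodule.sum_mem _ fun m _ => Submodule.smul_mem _ _ (Submodule.subset_span (hv_mem m))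
    have := Submodule.add_mem _ h1 h2
    simpa using this
  have hcard : Fintype.card (Fin n) = Module.finrank ℝ V := by
    rw [Fintype.card_fin, hn]
  let b : Basis (Fin n) ℝ V := basisOfTopLeSpanOfCardEqFinrank c htop hcard
  have hb : ⇑b = c := coe_basisOfTopLeSpanOfCardEqFinrank c htop hcard
  refine ⟨b, fun i j => ?_⟩
  rw [LinearMap.toMatrix_apply, hb]
  by_cases hj : (j : ℕ) < 2 * k ∧ (j : ℕ) % 2 = 0
  · -- T (c j) = c (j+1)
    obtain ⟨hj1, hj2⟩ := hj
    have hTcj : T (c j) = c ⟨(j : ℕ) + 1, by have := j.isLt; omega⟩ := by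
      have e1 : c j = v ⟨(j : ℕ) / 2, by omega⟩ := by
        simp only [c, dif_pos hj1, if_pos hj2]
      have h1 : ((j : ℕ) + 1) < 2 * k := by omega
      have h2 : ¬ (((j : ℕ) + 1) % 2 = 0) := by omega
      have h3 : ((j : ℕ) + 1) / 2 = (j : ℕ) / 2 := by omega
      have e2 : c ⟨(j : ℕ) + 1, by have := j.isLt; omega⟩ =
          w ⟨(j : ℕ) / 2, by omega⟩ := by
        simp only [c, dif_pos h1, if_neg h2]
        congr 1
        exact Fin.ext h3
      rw [e1, e2, hvw]
    rw [hTcj, ← hb, b.repr_self, Finsupp.single_apply]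
    by_cases hij : (i : ℕ) = (j : ℕ) + 1
    · have : (⟨(j : ℕ) + 1, by have := j.isLt; omega⟩ : Fin n) = i := Fin.ext hij.symm
      rw [if_pos this, if_pos ⟨by omega, by omega, by omega⟩]
    · have : (⟨(j : ℕ) + 1, by have := j.isLt; omega⟩ : Fin n) ≠ i := by
        intro h; exact hij (by rw [← h])
      rw [if_neg this, if_neg]
      rintro ⟨h1, h2, h3⟩
      omega
  · -- T (c j) = 0
    have hTcj : T (c j) = 0 := by
      by_cases hj1 : (j : ℕ) < 2 * k
      · have hj2 : ¬ ((j : ℕ) % 2 = 0) := fun h => hj ⟨hj1, h⟩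
        have e1 : c j = w ⟨(j : ℕ) / 2, by omega⟩ := by
          simp only [c, dif_pos hj1, if_neg hj2]
        rw [e1]
        exact hWK (hwW _)
      · have e1 : c j = u ⟨(j : ℕ) - 2 * k, by have := j.isLt; omega⟩ := by
          simp only [c, dif_neg hj1]
        rw [e1]
        exact hUvK (huU _)
    rw [hTcj, map_zero, Finsupp.coe_zero, Pi.zero_apply, if_neg]
    rintro ⟨h1, h2, h3⟩
    exact hj ⟨by omega, by omega⟩


/-- A self-adjoint operator `T` with `T² = 0` on an `n`-dimensional real space with a
non-degenerate symmetric bilinear form of signature `(n-p,p)`, `p ≤ n-p`, has `rank T ≤ p`,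
and in a suitable basis is represented by `k = rank T` nilpotent `2×2` Jordan blocks
(with `1` in position `(2,1)`) together with a zero block. -/
theorem stmt_18 {V : Type*} [AddCommGroup V] [Module ℝ V] [FiniteDimensional ℝ V]
    {n p : ℕ} (hpn : p ≤ n - p) (hpn' : p ≤ n)
    (B : V →ₗ[ℝ] V →ₗ[ℝ] ℝ)
    (hsymm : ∀ u v : V, B u v = B v u)
    (b₀ : Basis (Fin n) ℝ V)
    (hdiag : ∀ i : Fin n, B (b₀ i) (b₀ i) = if (i : ℕ) < p then -1 else 1)
    (horth : ∀ i j : Fin n, i ≠ j → B (b₀ i) (b₀ j) = 0)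
    (T : V →ₗ[ℝ] V)
    (hT2 : T ∘ₗ T = 0)
    (hsa : ∀ y z : V, B (T y) z = B y (T z)) :
    Module.finrank ℝ (LinearMap.range T) ≤ p ∧
    ∃ b : Basis (Fin n) ℝ V, ∀ i j : Fin n,
      (LinearMap.toMatrix b b T) i j =
        if (i : ℕ) < 2 * Module.finrank ℝ (LinearMap.range T) ∧ (i : ℕ) % 2 = 1
            ∧ (j : ℕ) = (i : ℕ) - 1
        then 1 else 0 := by
  have hrank := aux_rank hpn' B b₀ hdiag horth T hT2 hsa
  have hn : Module.finrank ℝ V = n := by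
    rw [Module.finrank_eq_card_basis b₀, Fintype.card_fin]
  have hk2 : 2 * Module.finrank ℝ (LinearMap.range T) ≤ n := by omega
  exact ⟨hrank, aux_basis T hT2 hn hk2⟩
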